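/- Let P and Q be probability measures on a finite set X. For any function D : X → (0,1), define V(D) = Σ_x P(x) log D(x) + Σ_x Q(x) log(1 − D(x)). Then V(D) ≤ V(D*) where D*(x) = P(x)/(P(x)+Q(x)) (with D* defined arbitrarily in (0,1) where P(x)+Q(x)=0), and the maximum value equals 2·D_JS(P‖Q) − 2 log 2 when D_JS is computed with natural logarithm. -/

import Mathlib

noncomputable def klDivF {X : Type*} [Fintype X] (P Q : X → ℝ) : ℝ :=
  ∑ x, P x * Real.log (P x / Q x)

noncomputable def jsDivF {X : Type*} [Fintype X] (P Q : X → ℝ) : ℝ :=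
  (klDivF P (fun x => (P x + Q x) / 2) + klDivF Q (fun x => (P x + Q x) / 2)) / 2

def IsProbF {X : Type*} [Fintype X] (P : X → ℝ) : Prop :=
  (∀ x, 0 ≤ P x) ∧ ∑ x, P x = 1

lemma gibbs_pt (a b d : ℝ) (ha : 0 ≤ a) (hb : 0 ≤ b) (hd0 : 0 < d) (hd1 : d < 1) :
    a * Real.log d + b * Real.log (1 - d) ≤
      a * Real.log (a / (a + b)) + b * Real.log (b / (a + b)) := by
  rcases eq_or_lt_of_le ha with ha0 | ha
  · rcases eq_or_lt_of_le hb with hb0 | hb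
    · simp [← ha0, ← hb0]
    · have h1 : b * Real.log (1 - d) ≤ 0 :=
        mul_nonpos_of_nonneg_of_nonpos hb.le (Real.log_nonpos (by linarith) (by linarith))
      simp only [← ha0, zero_mul, zero_add, div_self (ne_of_gt hb), Real.log_one, mul_zero]
      exact h1
  · rcases eq_or_lt_of_le hb with hb0 | hb
    · have h1 : a * Real.log d ≤ 0 :=
        mul_nonpos_of_nonneg_of_nonpos ha.le (Real.log_nonpos hd0.le hd1.le)
      simp only [← hb0, zero_mul, add_zero, div_self (ne_of_gt ha), Real.log_one, mul_zero]
      exact h1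
    · have hs : 0 < a + b := by linarith
      have k1 : Real.log (d * (a + b) / a) ≤ d * (a + b) / a - 1 :=
        Real.log_le_sub_one_of_pos (div_pos (mul_pos hd0 hs) ha)
      have k2 : Real.log ((1 - d) * (a + b) / b) ≤ (1 - d) * (a + b) / b - 1 :=
        Real.log_le_sub_one_of_pos (div_pos (mul_pos (by linarith) hs) hb)
      have e1 : Real.log (d * (a + b) / a) = Real.log d - Real.log (a / (a + b)) := by
        rw [Real.log_div (by positivity) (ne_of_gt ha), Real.log_mul (ne_of_gt hd0) (ne_of_gt hs),
          Real.log_div (ne_of_gt ha) (ne_of_gt hs)]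
        ring
      have e2 : Real.log ((1 - d) * (a + b) / b) = Real.log (1 - d) - Real.log (b / (a + b)) := by
        rw [Real.log_div (ne_of_gt (mul_pos (by linarith : (0:ℝ) < 1 - d) hs)) (ne_of_gt hb),
          Real.log_mul (by linarith : (1 : ℝ) - d ≠ 0) (ne_of_gt hs),
          Real.log_div (ne_of_gt hb) (ne_of_gt hs)]
        ring
      have h1 : a * (Real.log d - Real.log (a / (a + b))) ≤ d * (a + b) - a := by
        rw [← e1]
        calc a * Real.log (d * (a + b) / a) ≤ a * (d * (a + b) / a - 1) := by
              exact mul_le_mul_of_nonneg_left k1 ha.le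
          _ = d * (a + b) - a := by field_simp
      have h2 : b * (Real.log (1 - d) - Real.log (b / (a + b))) ≤ (1 - d) * (a + b) - b := by
        rw [← e2]
        calc b * Real.log ((1 - d) * (a + b) / b) ≤ b * ((1 - d) * (a + b) / b - 1) := by
              exact mul_le_mul_of_nonneg_left k2 hb.le
          _ = (1 - d) * (a + b) - b := by field_simp
      nlinarith [h1, h2]

theorem stmt7 {X : Type*} [Fintype X] (P Q : X → ℝ) (hP : IsProbF P) (hQ : IsProbF Q)
    (D Dstar : X → ℝ) (hD : ∀ x, 0 < D x ∧ D x < 1)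
    (hDstar : ∀ x, P x + Q x ≠ 0 → Dstar x = P x / (P x + Q x))
    (hDstar' : ∀ x, P x + Q x = 0 → 0 < Dstar x ∧ Dstar x < 1) :
    (∑ x, P x * Real.log (D x)) + (∑ x, Q x * Real.log (1 - D x)) ≤
      (∑ x, P x * Real.log (Dstar x)) + (∑ x, Q x * Real.log (1 - Dstar x)) ∧
    (∑ x, P x * Real.log (Dstar x)) + (∑ x, Q x * Real.log (1 - Dstar x)) =
      2 * jsDivF P Q - 2 * Real.log 2 := by
  obtain ⟨hP0, hP1⟩ := hP
  obtain ⟨hQ0, hQ1⟩ := hQ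
  -- pointwise identification of the Dstar terms
  have eA : ∀ x, P x * Real.log (Dstar x) = P x * Real.log (P x / (P x + Q x)) := by
    intro x
    by_cases h : P x + Q x = 0
    · have hpx : P x = 0 := by have := hP0 x; have := hQ0 x; linarith
      simp [hpx]
    · rw [hDstar x h]
  have eB : ∀ x, Q x * Real.log (1 - Dstar x) = Q x * Real.log (Q x / (P x + Q x)) := by
    intro x
    by_cases h : P x + Q x = 0
    · have hqx : Q x = 0 := by have := hP0 x; have := hQ0 x; linarith
      simp [hqx]
    · rw [hDstar x h]
      congr 2
      field_simp
      ring
  have eA' : (∑ x, P x * Real.log (Dstar x)) = ∑ x, P x * Real.log (P x / (P x + Q x)) :=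
    Finset.sum_congr rfl fun x _ => eA x
  have eB' : (∑ x, Q x * Real.log (1 - Dstar x)) = ∑ x, Q x * Real.log (Q x / (P x + Q x)) :=
    Finset.sum_congr rfl fun x _ => eB x
  constructor
  · rw [eA', eB', ← Finset.sum_add_distrib, ← Finset.sum_add_distrib]
    apply Finset.sum_le_sum
    intro x _
    exact gibbs_pt (P x) (Q x) (D x) (hP0 x) (hQ0 x) (hD x).1 (hD x).2
  · rw [eA', eB']
    have key : ∀ (R : X → ℝ), (∀ x, 0 ≤ R x) → (∑ x, R x) = 1 →
        (∀ x, P x + Q x = 0 → R x = 0) →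
        (∑ x, R x * Real.log (R x / ((P x + Q x) / 2))) =
        Real.log 2 + ∑ x, R x * Real.log (R x / (P x + Q x)) := by
      intro R hR0 hR1 hRz
      have ptall : ∀ x, R x * Real.log (R x / ((P x + Q x) / 2)) =
          R x * Real.log 2 + R x * Real.log (R x / (P x + Q x)) := by
        intro x
        by_cases hs : P x + Q x = 0
        · simp [hRz x hs]
        · rcases eq_or_lt_of_le (hR0 x) with h0 | h0
          · simp [← h0]
          · have hs' : 0 < P x + Q x :=
              lt_of_le_of_ne (by have := hP0 x; have := hQ0 x; linarith) (Ne.symm hs)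
            have e : R x / ((P x + Q x) / 2) = 2 * (R x / (P x + Q x)) := by
              field_simp
            rw [e, Real.log_mul two_ne_zero (ne_of_gt (div_pos h0 hs')), mul_add]
      calc (∑ x, R x * Real.log (R x / ((P x + Q x) / 2)))
          = ∑ x, (R x * Real.log 2 + R x * Real.log (R x / (P x + Q x))) :=
            Finset.sum_congr rfl fun x _ => ptall x
        _ = (∑ x, R x) * Real.log 2 + ∑ x, R x * Real.log (R x / (P x + Q x)) := by
            rw [Finset.sum_add_distrib, ← Finset.sum_mul]
        _ = Real.log 2 + ∑ x, R x * Real.log (R x / (P x + Q x)) := by rw [hR1, one_mul]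
    have kP := key P hP0 hP1 (fun x hs => by have := hP0 x; have := hQ0 x; linarith)
    have kQ := key Q hQ0 hQ1 (fun x hs => by have := hP0 x; have := hQ0 x; linarith)
    simp only [jsDivF, klDivF]
    rw [kP, kQ]
    ring
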